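/- arXiv:1410.6772 — 10 statements merged into one kernel-verified Lean document; each statement's English description precedes it below -/
import Mathlib

section
/- Let χ(z) = a₀ + a₁z + ⋯ + aₙzⁿ be a complex polynomial with aₙ ≠ 0, and define its n-inverse χ*(z) = aₙ + aₙ₋₁z + ⋯ + a₀zⁿ. Then all zeros of χ lie in the open unit disk Δ if and only if 0 is not in the image χ*(Δ̄) of the closed unit disk under χ*. -/
theorem stability_iff_n_inverse_nonzero_on_closed_disk
    (n : ℕ) (a : ℕ → ℂ) (han : a n ≠ 0)
    (χ : ℂ → ℂ) (hχ : ∀ z, χ z = ∑ k ∈ Finset.range (n + 1), a k * z ^ k)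
    (χs : ℂ → ℂ) (hχs : ∀ z, χs z = ∑ k ∈ Finset.range (n + 1), a (n - k) * z ^ k) :
    (∀ z : ℂ, χ z = 0 → ‖z‖ < 1) ↔
      (∀ z : ℂ, ‖z‖ ≤ 1 → χs z ≠ 0) := by
  have key : ∀ z : ℂ, z ≠ 0 → χs z = z ^ n * χ (1 / z) := by
    intro z hz
    rw [hχs, hχ, Finset.mul_sum,
      ← Finset.sum_range_reflect (fun k => z ^ n * (a k * (1 / z) ^ k)) (n + 1)]
    apply Finset.sum_congr rfl
    intro k hk
    simp only [Finset.mem_range, Nat.lt_succ_iff] at hk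
    have h1 : n + 1 - 1 - k = n - k := by omega
    rw [h1]
    field_simp
    have hzn : z ^ n = z ^ k * z ^ (n - k) := by rw [← pow_add]; congr 1; omega
    rw [hzn, one_div, inv_pow, mul_assoc, mul_assoc, mul_inv_cancel₀ (pow_ne_zero _ hz), mul_one]
  have hχs0 : χs 0 = a n := by
    rw [hχs, Finset.sum_eq_single 0]
    · simp
    · intro k _ hk; simp [zero_pow hk]
    · simp
  constructor
  · intro h z hz hzs
    by_cases h0 : z = 0
    · subst h0; exact han (hχs0 ▸ hzs)
    · have hk := key z h0
      rw [hzs] at hk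
      have hχ0 : χ (1 / z) = 0 := by
        rcases mul_eq_zero.mp hk.symm with h' | h'
        · exact absurd ((pow_eq_zero_iff'.mp h').1) h0
        · exact h'
      have := h _ hχ0
      rw [norm_div, norm_one] at this
      have hzpos : 0 < ‖z‖ := norm_pos_iff.mpr h0
      rw [div_lt_one hzpos] at this
      linarith
  · intro h z hz
    by_contra hge
    push_neg at hge
    have h0 : z ≠ 0 := by
      intro h0; rw [h0] at hge; norm_num at hge
    have hinv : ‖1 / z‖ ≤ 1 := by
      rw [norm_div, norm_one, div_le_one (norm_pos_iff.mpr h0)]; exact hge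
    have hz' : (1 : ℂ) / z ≠ 0 := one_div_ne_zero h0
    have := key (1 / z) hz'
    rw [one_div_one_div, hz, mul_zero] at this
    exact h _ hinv this
end

section
/- Let q(z) = q̂(1)z + q̂(2)z² + ⋯ + q̂(n)zⁿ be a complex polynomial with q(0) = 0, and let w ∈ ℂ be a point not in the image q(Δ) of the open unit disk. Then for every k with 1 ≤ k ≤ n, the coefficient bound |q̂(k)| ≤ C(n,k)·|w| holds, where C(n,k) is the binomial coefficient. -/
open Polynomial

lemma norm_mprod (s : Multiset ℂ) : ‖s.prod‖ = (s.map norm).prod :=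
  map_multiset_prod (normHom : ℂ →*₀ ℝ) s

lemma esymm_abs_bound (s : Multiset ℂ) (h : ∀ r ∈ s, 1 ≤ ‖r‖) (j : ℕ) :
    ‖s.esymm j‖ ≤ ((Multiset.card s).choose j) * (s.map norm).prod := by
  rw [Multiset.esymm]
  have h1 : ‖(Multiset.map Multiset.prod (s.powersetCard j)).sum‖ ≤
      ((Multiset.map Multiset.prod (s.powersetCard j)).map norm).sum :=
    Multiset.le_sum_of_subadditive norm norm_zero.le (fun a b => norm_add_le a b) _
  refine h1.trans ?_
  have h2 : ((Multiset.map Multiset.prod (s.powersetCard j)).map norm).sum ≤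
      Multiset.card ((Multiset.map Multiset.prod (s.powersetCard j)).map norm) •
        (s.map norm).prod := by
    apply Multiset.sum_le_card_nsmul
    intro x hx
    simp only [Multiset.mem_map] at hx
    obtain ⟨y, hy, rfl⟩ := hx
    obtain ⟨t, ht, rfl⟩ := hy
    have hts : t ≤ s := (Multiset.mem_powersetCard.mp ht).1
    rw [norm_mprod]
    have hsplit : (s.map norm).prod
        = (t.map norm).prod * ((s - t).map norm).prod := by
      rw [← Multiset.prod_add, ← Multiset.map_add, add_tsub_cancel_of_le hts]
    rw [hsplit]
    have h1le : 1 ≤ ((s - t).map norm).prod := by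
      apply Multiset.one_le_prod
      intro a ha
      simp only [Multiset.mem_map] at ha
      obtain ⟨r, hr, rfl⟩ := ha
      exact h r (Multiset.mem_of_le (Multiset.sub_le_self s t) hr)
    have hnn : 0 ≤ (t.map norm).prod := by
      apply Multiset.prod_nonneg
      intro a ha
      simp only [Multiset.mem_map] at ha
      obtain ⟨r, hr, rfl⟩ := ha
      exact norm_nonneg r
    nlinarith
  refine h2.trans ?_
  simp [Multiset.card_powersetCard, nsmul_eq_mul]

theorem coeff_bound_of_omitted_value
    (n : ℕ) (qh : ℕ → ℂ)
    (q : ℂ → ℂ) (hq : ∀ z, q z = ∑ k ∈ Finset.Icc 1 n, qh k * z ^ k)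
    (w : ℂ) (hw : ∀ z : ℂ, ‖z‖ < 1 → q z ≠ w) :
    ∀ k, 1 ≤ k → k ≤ n → ‖qh k‖ ≤ (n.choose k) * ‖w‖ := by
  intro k hk1 hkn
  have hq0 : q 0 = 0 := by
    rw [hq]
    apply Finset.sum_eq_zero
    intro i hi
    have : i ≠ 0 := by have := (Finset.mem_Icc.mp hi).1; omega
    simp [this]
  have hw0 : w ≠ 0 := by
    intro h
    exact hw 0 (by simp) (by rw [hq0, h])
  set P : ℂ[X] := C w - ∑ j ∈ Finset.Icc 1 n, C (qh j) * X ^ j with hPdef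
  have hPeval : ∀ z, P.eval z = w - q z := by
    intro z
    simp [hPdef, hq, eval_finset_sum]
  have hc0 : P.coeff 0 = w := by
    have := hPeval 0
    rw [hq0, sub_zero] at this
    rwa [← coeff_zero_eq_eval_zero] at this
  have hck : P.coeff k = -qh k := by
    simp only [hPdef, coeff_sub, finset_sum_coeff, coeff_C_mul, coeff_X_pow, coeff_C]
    have hk0 : k ≠ 0 := by omega
    rw [if_neg hk0, zero_sub]
    rw [Finset.sum_eq_single k]
    · simp
    · intro b _ hbk; simp [Ne.symm hbk]
    · intro hk; exact absurd (Finset.mem_Icc.mpr ⟨hk1, hkn⟩) hk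
  have hPdeg : P.natDegree ≤ n := by
    apply (natDegree_sub_le _ _).trans
    simp only [natDegree_C, max_le_iff]
    refine ⟨by omega, ?_⟩
    apply (natDegree_sum_le _ _).trans
    rw [Finset.fold_max_le]
    refine ⟨by omega, ?_⟩
    intro i hi
    exact (natDegree_C_mul_le _ _).trans (by simpa using (Finset.mem_Icc.mp hi).2)
  have hroots : ∀ r ∈ P.roots, 1 ≤ ‖r‖ := by
    intro r hr
    by_contra hcon
    push_neg at hcon
    apply hw r hcon
    have h0 : P.eval r = 0 := isRoot_of_mem_roots hr
    rw [hPeval] at h0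
    linear_combination -h0
  set m := P.natDegree with hm
  have hPne : P ≠ 0 := by
    intro h
    apply hw0
    rw [← hc0, h, coeff_zero]
  have hcard : Multiset.card P.roots = m :=
    Polynomial.splits_iff_card_roots.mp (IsAlgClosed.splits P)
  have hfact : C P.leadingCoeff * (Multiset.map (fun a => X - C a) P.roots).prod = P :=
    Polynomial.C_leadingCoeff_mul_prod_multiset_X_sub_C hcard
  have habs0 : ‖w‖ = ‖P.leadingCoeff‖ * (P.roots.map norm).prod := by
    have h1 : eval 0 P = w := by rw [hPeval 0, hq0, sub_zero]
    have h2 := congrArg (eval 0) hfact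
    rw [h1] at h2
    simp only [eval_mul, eval_C, eval_multiset_prod, Multiset.map_map, Function.comp,
      eval_sub, eval_X, eval_C, zero_sub] at h2
    rw [← h2, norm_mul, norm_mprod, Multiset.map_map]
    congr 1
    apply congrArg
    apply Multiset.map_congr rfl
    intro a _
    simp
  by_cases hkm : k ≤ m
  · have hcoeff : P.coeff k = P.leadingCoeff * ((-1)^(m-k) * P.roots.esymm (m-k)) := by
      conv_lhs => rw [← hfact]
      rw [coeff_C_mul, Multiset.prod_X_sub_C_coeff P.roots (hcard ▸ hkm), hcard]
    have hbd := esymm_abs_bound P.roots hroots (m - k)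
    rw [hcard] at hbd
    have hlcnn : (0:ℝ) ≤ ‖P.leadingCoeff‖ := norm_nonneg _
    calc ‖qh k‖ = ‖P.coeff k‖ := by rw [hck, norm_neg]
      _ = ‖P.leadingCoeff‖ * ‖P.roots.esymm (m-k)‖ := by
          rw [hcoeff]; simp [map_mul]
      _ ≤ ‖P.leadingCoeff‖ * ((m.choose (m-k)) * (P.roots.map norm).prod) :=
          mul_le_mul_of_nonneg_left hbd hlcnn
      _ = (m.choose (m-k)) * ‖w‖ := by rw [habs0]; ring
      _ = (m.choose k) * ‖w‖ := by rw [Nat.choose_symm hkm]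
      _ ≤ (n.choose k) * ‖w‖ := by
          apply mul_le_mul_of_nonneg_right _ (norm_nonneg w)
          exact_mod_cast Nat.choose_le_choose k hPdeg
  · have hz : qh k = 0 := by
      have h0 := coeff_eq_zero_of_natDegree_lt (lt_of_not_ge hkm)
      rw [hck, neg_eq_zero] at h0
      exact h0
    rw [hz]
    simpa using mul_nonneg (by positivity) (norm_nonneg w)
end

section
/- The coefficient bound in the previous lemma is sharp: for the polynomial q(z) = w − w(1−z)ⁿ (with w ≠ 0), the point w is not in q(Δ), and for each 1 ≤ k ≤ n the k-th coefficient of q has absolute value exactly C(n,k)·|w|. -/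
theorem coeff_bound_sharp
    (n : ℕ) (w : ℂ) (hw : w ≠ 0)
    (q : Polynomial ℂ)
    (hq : q = Polynomial.C w - Polynomial.C w * (1 - Polynomial.X) ^ n) :
    (∀ z : ℂ, ‖z‖ < 1 → q.eval z ≠ w) ∧
      (∀ k, 1 ≤ k → k ≤ n →
        ‖q.coeff k‖ = (n.choose k) * ‖w‖) := by
  subst hq
  constructor
  · intro z hz h
    simp only [Polynomial.eval_sub, Polynomial.eval_mul, Polynomial.eval_pow,
      Polynomial.eval_one, Polynomial.eval_X, Polynomial.eval_C] at h
    have h1 : (1 - z) ≠ 0 := by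
      intro h0
      have : z = 1 := by linear_combination -h0
      rw [this] at hz; simp at hz
    have h2 : w * (1 - z) ^ n = 0 := by linear_combination -h
    rcases mul_eq_zero.1 h2 with h3 | h3
    · exact hw h3
    · exact h1 (pow_eq_zero_iff' .. |>.mp h3).1
  · intro k hk1 hkn
    have hpow : ((1 - Polynomial.X : Polynomial ℂ) ^ n).coeff k
        = (-1 : ℂ) ^ n * ((-1 : ℂ) ^ (n - k) * (n.choose k : ℂ)) := by
      have e : (1 - Polynomial.X : Polynomial ℂ) ^ n
          = Polynomial.C ((-1 : ℂ) ^ n) * (Polynomial.X + Polynomial.C (-1)) ^ n := by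
        rw [map_pow, ← mul_pow]
        congr 1
        simp [Polynomial.C_neg]
        ring
      rw [e, Polynomial.coeff_C_mul, Polynomial.coeff_X_add_C_pow]
    have hck : (Polynomial.C w - Polynomial.C w * (1 - Polynomial.X) ^ n).coeff k
        = -(w * ((-1 : ℂ) ^ n * ((-1 : ℂ) ^ (n - k) * (n.choose k : ℂ)))) := by
      rw [Polynomial.coeff_sub, Polynomial.coeff_C_mul, hpow, Polynomial.coeff_C,
        if_neg (by omega)]
      ring
    rw [hck]
    simp [map_mul, map_pow, Complex.norm_natCast]
    ring
end

section
/- Let q(z) = z + q₂z² + ⋯ + qₙzⁿ be a complex polynomial of degree at most n with q(0) = 0 and q'(0) = 1. Then the image q(Δ) of the open unit disk contains the open disk of radius 1/n centered at the origin. -/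
open Polynomial

lemma coeff1_bound (s : Multiset ℂ) (hs : ∀ r ∈ s, 1 ≤ ‖r‖) :
    ‖(((s.map fun r => (X : ℂ[X]) - C r).prod).coeff 1)‖
      ≤ s.card * (s.map (‖·‖)).prod := by
  induction s using Multiset.induction with
  | empty => simp [coeff_one]
  | cons a s ih =>
    have ha : 1 ≤ ‖a‖ := hs a (Multiset.mem_cons_self a s)
    have hs' : ∀ r ∈ s, 1 ≤ ‖r‖ := fun r hr => hs r (Multiset.mem_cons_of_mem hr)
    have hprod1 : (1:ℝ) ≤ (s.map (‖·‖)).prod := by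
      apply Multiset.one_le_prod
      intro x hx
      obtain ⟨r, hr, rfl⟩ := Multiset.mem_map.1 hx
      exact hs' r hr
    have hc0 : ‖(((s.map fun r => (X : ℂ[X]) - C r).prod).coeff 0)‖
        = (s.map (‖·‖)).prod := by
      rw [coeff_zero_eq_eval_zero, eval_multiset_prod]
      rw [Multiset.map_map]
      simp only [Function.comp, eval_sub, eval_X, eval_C, zero_sub]
      rw [show ∀ m : Multiset ℂ, ‖m.prod‖ = (m.map (‖·‖)).prod from fun m => map_multiset_prod normHom m, Multiset.map_map]
      simp [Function.comp]
    have key : ((a ::ₘ s).map fun r => (X : ℂ[X]) - C r).prod.coeff 1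
        = ((s.map fun r => (X : ℂ[X]) - C r).prod).coeff 0
          - a * ((s.map fun r => (X : ℂ[X]) - C r).prod).coeff 1 := by
      rw [Multiset.map_cons, Multiset.prod_cons, sub_mul, coeff_sub,
        coeff_C_mul]
      congr 1
      exact coeff_X_mul _ 0
    rw [key]
    calc ‖_‖ ≤ ‖(((s.map fun r => (X : ℂ[X]) - C r).prod).coeff 0)‖
          + ‖a‖ * ‖(((s.map fun r => (X : ℂ[X]) - C r).prod).coeff 1)‖ := by
            simpa [map_mul] using norm_sub_le _ (a * _)
      _ ≤ (s.map (‖·‖)).prod + ‖a‖ * (s.card * (s.map (‖·‖)).prod) := by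
            rw [hc0]
            have := ih hs'
            nlinarith [norm_nonneg a, this, ha]
      _ ≤ (a ::ₘ s).card * ((a ::ₘ s).map (‖·‖)).prod := by
            simp only [Multiset.card_cons, Multiset.map_cons, Multiset.prod_cons]
            push_cast
            nlinarith [norm_nonneg a, hprod1, Multiset.card s]

lemma abs_coeff0 (s : Multiset ℂ) :
    ‖(((s.map fun r => (X : ℂ[X]) - C r).prod).coeff 0)‖
      = (s.map (‖·‖)).prod := by
  rw [coeff_zero_eq_eval_zero, eval_multiset_prod]
  rw [Multiset.map_map]
  simp only [Function.comp, eval_sub, eval_X, eval_C, zero_sub]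
  rw [show ∀ m : Multiset ℂ, ‖m.prod‖ = (m.map (‖·‖)).prod from fun m => map_multiset_prod normHom m, Multiset.map_map]
  simp [Function.comp]

lemma arith_key (n : ℕ) (hn : 1 ≤ n) (A B P m W : ℝ)
    (hA : 0 ≤ A) (hm : 0 ≤ m)
    (h1 : (1:ℝ) = A * B) (h2 : B ≤ m * P) (h3 : W = A * P)
    (h4 : m ≤ (n:ℝ)) (h5 : W < 1 / n) (hW : 0 ≤ W) : False := by
  have hnpos : (0:ℝ) < n := by exact_mod_cast hn
  have e1 : A * B ≤ m * W := by
    calc A * B ≤ A * (m * P) := mul_le_mul_of_nonneg_left h2 hA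
      _ = m * (A * P) := by ring
      _ = m * W := by rw [h3]
  have e2 : m * W ≤ n * W := mul_le_mul_of_nonneg_right h4 hW
  have e3 : (n:ℝ) * W < n * (1/n) := mul_lt_mul_of_pos_left h5 hnpos
  have e4 : (n:ℝ) * (1/n) = 1 := by field_simp
  linarith

theorem range_contains_disk_one_div_n
    (n : ℕ) (hn : 1 ≤ n) (q : Polynomial ℂ)
    (hdeg : q.natDegree ≤ n) (h0 : q.coeff 0 = 0) (h1 : q.coeff 1 = 1) :
    ∀ w : ℂ, ‖w‖ < 1 / n →
      ∃ z : ℂ, ‖z‖ < 1 ∧ q.eval z = w := by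
  intro w hw
  rcases eq_or_ne w 0 with rfl | hw0
  · exact ⟨0, by simp, by rw [← coeff_zero_eq_eval_zero]; exact h0⟩
  by_contra hcon
  push_neg at hcon
  set p : ℂ[X] := q - C w with hp
  have hp1 : p.coeff 1 = 1 := by
    simp [hp, coeff_sub, coeff_C, h1]
  have hp0 : p.coeff 0 = -w := by
    simp [hp, coeff_sub, coeff_C, h0]
  have hpne : p ≠ 0 := by
    intro h; rw [h] at hp1; simp at hp1
  have hdegp : p.natDegree ≤ n := by
    refine le_trans (natDegree_sub_le _ _) (max_le hdeg ?_)
    simpa [natDegree_C] using Nat.zero_le n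
  set s : Multiset ℂ := p.roots with hs
  have hroots : ∀ r ∈ s, 1 ≤ ‖r‖ := by
    intro r hr
    by_contra hlt
    push_neg at hlt
    have hr' : p.IsRoot r := (mem_roots hpne).1 hr
    have : q.eval r = w := by
      have := hr'
      simp [hp, IsRoot, eval_sub, eval_C, sub_eq_zero] at this
      exact this
    exact hcon r hlt this
  have hsplit : p = C p.leadingCoeff * (s.map fun a => X - C a).prod :=
    (IsAlgClosed.splits p).eq_prod_roots
  have hc1 : (1:ℝ) = ‖p.leadingCoeff‖
      * ‖(((s.map fun r => (X : ℂ[X]) - C r).prod).coeff 1)‖ := by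
    have : p.coeff 1 = p.leadingCoeff * ((s.map fun r => (X : ℂ[X]) - C r).prod).coeff 1 := by
      conv_lhs => rw [hsplit]
      rw [coeff_C_mul]
    rw [hp1] at this
    calc (1:ℝ) = ‖(1:ℂ)‖ := by simp
      _ = _ := by rw [this, norm_mul]
  have hc0 : ‖w‖ = ‖p.leadingCoeff‖ * (s.map (‖·‖)).prod := by
    have : p.coeff 0 = p.leadingCoeff * ((s.map fun r => (X : ℂ[X]) - C r).prod).coeff 0 := by
      conv_lhs => rw [hsplit]
      rw [coeff_C_mul]
    rw [hp0] at this
    calc ‖w‖ = ‖(-w)‖ := by simp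
      _ = _ := by rw [this, norm_mul, abs_coeff0]
  have hcard : (s.card : ℝ) ≤ n := by
    exact_mod_cast le_trans (p.card_roots' ) hdegp
  have hb := coeff1_bound s hroots
  have hPnn : (0:ℝ) ≤ (s.map (‖·‖)).prod :=
    Multiset.prod_nonneg (by
      intro x hx
      obtain ⟨r, _, rfl⟩ := Multiset.mem_map.1 hx
      exact norm_nonneg r)
  exact arith_key n hn _ _ _ _ _ (norm_nonneg _) (by positivity)
    hc1 hb hc0 hcard hw (norm_nonneg _)
end

section
/- Let q(z) = z + q₂z² + ⋯ + qₙzⁿ be a complex polynomial of degree at most n with q(0) = 0 and q'(0) = 1, and let R > 0. Then the image q(Δ_R) of the open disk of radius R centered at the origin contains the open disk of radius R/n centered at the origin. -/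
open Polynomial Multiset

theorem range_contains_disk_R_div_n
    (n : ℕ) (hn : 1 ≤ n) (R : ℝ) (hR : 0 < R) (q : Polynomial ℂ)
    (hdeg : q.natDegree ≤ n) (h0 : q.coeff 0 = 0) (h1 : q.coeff 1 = 1) :
    ∀ w : ℂ, ‖w‖ < R / n →
      ∃ z : ℂ, ‖z‖ < R ∧ q.eval z = w := by
  intro w hw
  by_cases hw0 : w = 0
  · exact ⟨0, by simpa using hR, by rw [← coeff_zero_eq_eval_zero, h0, hw0]⟩
  by_contra hcon
  push_neg at hcon
  set p : Polynomial ℂ := q - C w with hp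
  have hp1 : p.coeff 1 = 1 := by simp [hp, h1]
  have hp0 : p.coeff 0 = -w := by simp [hp, h0]
  have hpne : p ≠ 0 := fun h => by simp [h] at hp1
  have hsplit : p.Splits := IsAlgClosed.splits p
  set s : Multiset ℂ := p.roots with hs
  set m : ℕ := Multiset.card s with hm
  have hcard : m = p.natDegree := splits_iff_card_roots.mp hsplit
  have hfac : p = C p.leadingCoeff * (s.map fun r => X - C r).prod :=
    hsplit.eq_prod_roots
  have hroot : ∀ r ∈ s, R ≤ ‖r‖ := by
    intro r hr
    by_contra hlt
    push_neg at hlt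
    have hz : p.eval r = 0 := isRoot_of_mem_roots hr
    have hq : q.eval r = w := by
      simpa [hp, sub_eq_zero] using hz
    exact hcon r hlt hq
  have hm1 : 1 ≤ m := by
    rw [hcard]
    by_contra h
    push_neg at h
    have := Polynomial.coeff_eq_zero_of_natDegree_lt (by omega : p.natDegree < 1)
    rw [hp1] at this; exact one_ne_zero this
  have hmn : m ≤ n := by
    rw [hcard]
    calc p.natDegree ≤ max q.natDegree (C w).natDegree := natDegree_sub_le _ _
    _ ≤ n := by simp [hdeg]
  -- coefficient 1 via Vieta
  have hc1 : (1 : ℂ) = p.leadingCoeff * ((-1) ^ (m - 1) * s.esymm (m - 1)) := by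
    have h' : p.coeff 1 = p.leadingCoeff * ((-1) ^ (Multiset.card s - 1) *
        s.esymm (Multiset.card s - 1)) := by
      conv_lhs => rw [hfac]
      rw [coeff_C_mul, Multiset.prod_X_sub_C_coeff s (by omega : 1 ≤ Multiset.card s)]
    rw [hp1, ← hm] at h'
    exact h'
  -- coefficient 0 via evaluation
  have habs0 : ‖w‖ = ‖p.leadingCoeff‖ * ‖s.prod‖ := by
    have hev : -w = p.leadingCoeff * ((-1) ^ m * s.prod) := by
      rw [← hp0, coeff_zero_eq_eval_zero]
      conv_lhs => rw [hfac]
      rw [eval_mul, eval_C, eval_multiset_prod, Multiset.map_map]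
      congr 1
      have : (s.map fun r => Polynomial.eval 0 (X - C r)) = s.map Neg.neg := by
        apply Multiset.map_congr rfl
        intro r _
        simp
      rw [show (Multiset.map ((fun p => Polynomial.eval 0 p) ∘ fun r => X - C r) s)
          = s.map fun r => Polynomial.eval 0 (X - C r) from rfl, this,
        Multiset.prod_map_neg, ← hm]
    have h2 := congrArg norm hev
    rw [norm_neg, norm_mul, norm_mul, norm_pow, norm_neg, norm_one, one_pow,
      one_mul] at h2
    exact h2
  -- bound on esymm (m-1)
  have hbound : ‖s.esymm (m - 1)‖ ≤ (m : ℝ) / R * ‖s.prod‖ := by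
    rw [Multiset.esymm]
    calc ‖((s.powersetCard (m-1)).map Multiset.prod).sum‖
        ≤ (((s.powersetCard (m-1)).map Multiset.prod).map (fun x => ‖x‖)).sum := by
          simpa [Multiset.map_map, Function.comp] using
            norm_multiset_sum_le ((s.powersetCard (m-1)).map Multiset.prod)
      _ ≤ (Multiset.card (((s.powersetCard (m-1)).map Multiset.prod).map (fun x => ‖x‖))) •
            (‖s.prod‖ / R) := by
          apply Multiset.sum_le_card_nsmul
          intro x hx
          simp only [Multiset.mem_map] at hx
          obtain ⟨y, ⟨t, ht, rfl⟩, rfl⟩ := hx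
          rw [Multiset.mem_powersetCard] at ht
          obtain ⟨hts, htc⟩ := ht
          obtain ⟨r, hr⟩ := Multiset.card_eq_one.mp (by
            rw [Multiset.card_sub hts, htc]; omega : Multiset.card (s - t) = 1)
          have hsum : s = t + {r} := by
            rw [← hr, add_comm]; exact (tsub_add_cancel_of_le hts).symm
          have hrs : r ∈ s := by rw [hsum]; simp
          have hrR : R ≤ ‖r‖ := hroot r hrs
          have hprod : s.prod = t.prod * r := by rw [hsum]; simp
          rw [hprod, norm_mul, le_div_iff₀ hR]
          nlinarith [norm_nonneg t.prod, norm_nonneg r]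
      _ ≤ (m : ℝ) / R * ‖s.prod‖ := by
          rw [Multiset.card_map, Multiset.card_map, Multiset.card_powersetCard, ← hm]
          rw [nsmul_eq_mul]
          have hch : m.choose (m - 1) = m := by
            have := Nat.choose_symm hm1
            simpa [Nat.choose_one_right] using this
          rw [hch]
          exact le_of_eq (by ring)
  -- final contradiction
  have h1abs : (1 : ℝ) = ‖p.leadingCoeff‖ * ‖s.esymm (m - 1)‖ := by
    have := congrArg norm hc1
    simpa [norm_mul] using this
  have hcnn : 0 ≤ ‖p.leadingCoeff‖ := norm_nonneg _
  have key : (1 : ℝ) ≤ (m : ℝ) / R * ‖w‖ := by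
    rw [h1abs, habs0]
    calc ‖p.leadingCoeff‖ * ‖s.esymm (m - 1)‖
        ≤ ‖p.leadingCoeff‖ * ((m : ℝ) / R * ‖s.prod‖) := by
          exact mul_le_mul_of_nonneg_left hbound hcnn
      _ = (m : ℝ) / R * (‖p.leadingCoeff‖ * ‖s.prod‖) := by ring
  have hwnn : 0 ≤ ‖w‖ := norm_nonneg _
  have hn0 : (0 : ℝ) < n := by exact_mod_cast hn
  have hmR : (m : ℝ) / R ≤ (n : ℝ) / R := by
    gcongr
  have hlt : (m : ℝ) / R * ‖w‖ < 1 := by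
    have ha : (m : ℝ) / R * ‖w‖ ≤ (n : ℝ) / R * ‖w‖ :=
      mul_le_mul_of_nonneg_right hmR hwnn
    have hb : (n : ℝ) / R * ‖w‖ < (n : ℝ) / R * (R / n) :=
      mul_lt_mul_of_pos_left hw (by positivity)
    have hc : (n : ℝ) / R * (R / n) = 1 := by field_simp
    linarith
  linarith
end

section
/- Let q(z) = z + q₂z² + ⋯ + qₙzⁿ be a complex polynomial of degree at most n with q(0) = 0 and q'(0) = 1, and let R > 0. Then the image q(Δ̄_R) of the closed disk of radius R centered at the origin contains the closed disk of radius R/n centered at the origin. -/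
open Polynomial Multiset

theorem range_contains_closed_disk_R_div_n
    (n : ℕ) (hn : 1 ≤ n) (R : ℝ) (hR : 0 < R) (q : Polynomial ℂ)
    (hdeg : q.natDegree ≤ n) (h0 : q.coeff 0 = 0) (h1 : q.coeff 1 = 1) :
    ∀ w : ℂ, ‖w‖ ≤ R / n →
      ∃ z : ℂ, ‖z‖ ≤ R ∧ q.eval z = w := by
  intro w hw
  rcases eq_or_ne w 0 with rfl | hw0
  · exact ⟨0, by simp [hR.le], by simpa [← Polynomial.coeff_zero_eq_eval_zero] using h0⟩
  set p : Polynomial ℂ := q - Polynomial.C w with hp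
  have hpc1 : p.coeff 1 = 1 := by
    simp [hp, Polynomial.coeff_C, h1]
  have hk1 : 1 ≤ p.natDegree :=
    Polynomial.le_natDegree_of_ne_zero (by rw [hpc1]; exact one_ne_zero)
  set k := p.natDegree with hkdef
  have hkn : k ≤ n := by
    rw [hkdef, hp, Polynomial.natDegree_sub_C]; exact hdeg
  have hp0 : p ≠ 0 := fun h => by simp [h] at hpc1
  have hsplit : p.Splits := IsAlgClosed.splits p
  set s := p.roots with hs
  have hcard : Multiset.card s = k := (Polynomial.splits_iff_card_roots.mp hsplit)
  set c := p.leadingCoeff with hc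
  have hcne : c ≠ 0 := Polynomial.leadingCoeff_ne_zero.mpr hp0
  have hcpos : 0 < ‖c‖ := norm_pos_iff.mpr hcne
  -- evaluation at 0
  have heval0 : p.eval 0 = -w := by
    simp [hp, ← Polynomial.coeff_zero_eq_eval_zero, h0]
  have hprod : p.eval 0 = c * (s.map fun a => (0 : ℂ) - a).prod :=
    hsplit.eval_eq_prod_roots 0
  set P : ℝ := (s.map fun a => ‖a‖).prod with hP
  have hwP : ‖w‖ = ‖c‖ * P := by
    have := congrArg norm (heval0 ▸ hprod)
    rw [norm_neg, norm_mul, show ‖(s.map fun a => (0:ℂ) - a).prod‖ = ((s.map fun a => (0:ℂ) - a).map norm).prod from map_multiset_prod (normHom : ℂ →*₀ ℝ) _, Multiset.map_map] at this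
    simpa [Function.comp, hP] using this
  have hwpos : 0 < ‖w‖ := norm_pos_iff.mpr hw0
  have hPpos : 0 < P := by
    by_contra h
    push_neg at h
    nlinarith [hwP, hwpos, hcpos]
  have hkwpos : 0 < (k : ℝ) * ‖w‖ := by
    have : (1 : ℝ) ≤ (k : ℝ) := by exact_mod_cast hk1
    nlinarith
  -- coefficient 1 via Vieta
  have hvieta : p.coeff 1 = c * (-1) ^ (k - 1) * s.esymm (k - 1) :=
    Polynomial.coeff_eq_esymm_roots_of_card hcard hk1
  have hesymm : ‖s.esymm (k - 1)‖ * ‖c‖ = 1 := by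
    have := congrArg norm hvieta
    rw [hpc1] at this
    simp only [norm_mul, norm_pow, norm_neg, norm_one, one_pow, mul_one, norm_one] at this
    rw [this]; ring
  -- suppose all roots are large
  by_contra hcon
  push_neg at hcon
  have hroot : ∀ z ∈ s, q.eval z = w := by
    intro z hz
    have hz0 := Polynomial.isRoot_of_mem_roots hz
    have : q.eval z - w = 0 := by simpa [hp] using hz0
    exact sub_eq_zero.mp this
  have hbig : ∀ z ∈ s, (k : ℝ) * ‖w‖ < ‖z‖ := by
    intro z hz
    by_contra h
    push_neg at h
    refine hcon z ?_ (hroot z hz)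
    have h2 : (k : ℝ) * ‖w‖ ≤ (n : ℝ) * (R / n) := by
      have hkn' : (k : ℝ) ≤ (n : ℝ) := by exact_mod_cast hkn
      have hwn : ‖w‖ ≤ R / n := hw
      have hwnn : 0 ≤ ‖w‖ := norm_nonneg _
      nlinarith
    have h3 : (n : ℝ) * (R / n) = R := by
      field_simp
    calc ‖z‖ = ‖z‖ := rfl
      _ ≤ (k : ℝ) * ‖w‖ := h
      _ ≤ R := by rw [h3] at h2; exact h2
  -- the key estimate on esymm (k-1)
  set T := s.powersetCard (k - 1) with hT
  have hTcard : Multiset.card T = k := by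
    rw [hT, Multiset.card_powersetCard, hcard]
    rw [← Nat.choose_symm (Nat.sub_le k 1)]
    have h : k - (k - 1) = 1 := by omega
    rw [h, Nat.choose_one_right]
  have hTne : T ≠ ∅ := by
    intro h
    rw [h] at hTcard
    simp at hTcard
    omega
  have key : ∀ t ∈ T, ‖t.prod‖ < P / ((k : ℝ) * ‖w‖) := by
    intro t ht
    rw [hT, Multiset.mem_powersetCard] at ht
    obtain ⟨hts, htc⟩ := ht
    have hlt : t < s := lt_of_le_of_ne hts (by
      rintro rfl
      rw [hcard] at htc
      omega)
    obtain ⟨a, ha⟩ := Multiset.lt_iff_cons_le.mp hlt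
    have hseq : s = a ::ₘ t := by
      refine (Multiset.eq_of_le_of_card_le ha ?_).symm
      rw [Multiset.card_cons, htc, hcard]
      omega
    have hamem : a ∈ s := by rw [hseq]; exact Multiset.mem_cons_self a t
    have hP2 : P = ‖a‖ * (t.map fun z => ‖z‖).prod := by
      rw [hP, hseq]; simp
    have hQ : ‖t.prod‖ = (t.map fun z => ‖z‖).prod := map_multiset_prod (normHom : ℂ →*₀ ℝ) t
    have hbiga := hbig a hamem
    have hapos : 0 < ‖a‖ := lt_trans hkwpos hbiga
    have hQpos : 0 < (t.map fun z => ‖z‖).prod := by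
      nlinarith [hPpos]
    rw [hQ, lt_div_iff₀ hkwpos]
    nlinarith
  have hsum1 : ‖s.esymm (k - 1)‖ ≤ (T.map fun t => ‖t.prod‖).sum := by
    rw [Multiset.esymm]
    calc ‖((s.powersetCard (k - 1)).map Multiset.prod).sum‖
        ≤ (((s.powersetCard (k - 1)).map Multiset.prod).map norm).sum :=
          norm_multiset_sum_le _
      _ = (T.map fun t => ‖t.prod‖).sum := by rw [Multiset.map_map, hT]; rfl
  have hsum2 : (T.map fun t => ‖t.prod‖).sum <
      (T.map fun _ => P / ((k : ℝ) * ‖w‖)).sum :=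
    Multiset.sum_lt_sum_of_nonempty hTne key
  have hsum3 : (T.map fun _ => P / ((k : ℝ) * ‖w‖)).sum = (k : ℝ) * (P / ((k : ℝ) * ‖w‖)) := by
    rw [Multiset.map_const', Multiset.sum_replicate, hTcard, nsmul_eq_mul]
  have hfin : ‖s.esymm (k - 1)‖ < P / ‖w‖ := by
    have hkpos : (0 : ℝ) < (k : ℝ) := by exact_mod_cast hk1
    have : (k : ℝ) * (P / ((k : ℝ) * ‖w‖)) = P / ‖w‖ := by
      rw [mul_div_assoc', mul_div_mul_left _ _ hkpos.ne']
    rw [hsum3, this] at hsum2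
    exact lt_of_le_of_lt hsum1 hsum2
  have : (1 : ℝ) < 1 := by
    calc (1 : ℝ) = ‖s.esymm (k - 1)‖ * ‖c‖ := hesymm.symm
      _ < (P / ‖w‖) * ‖c‖ := by
          exact mul_lt_mul_of_pos_right hfin hcpos
      _ = 1 := by
          rw [mul_comm, hwP, mul_div_assoc']
          exact div_self (by positivity)
  exact absurd this (lt_irrefl 1)
end

section
/- The covering constant 1/n is sharp: for the polynomial q(z) = (R/n)((1 + z/R)ⁿ − 1) with R > 0, one has q(0) = 0, q'(0) = 1, and the image q(Δ_R) of the open disk of radius R does not contain any open disk of radius strictly greater than R/n centered at the origin; in particular the point −R/n is not in q(Δ_R). -/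
theorem covering_constant_sharp
    (n : ℕ) (hn : 1 ≤ n) (R : ℝ) (hR : 0 < R)
    (q : Polynomial ℂ)
    (hq : q = Polynomial.C ((R : ℂ) / n) *
        ((1 + Polynomial.C ((R : ℂ))⁻¹ * Polynomial.X) ^ n - 1)) :
    q.eval 0 = 0 ∧ q.derivative.eval 0 = 1 ∧
      (∀ ε : ℝ, R / n < ε →
        ¬ ∀ w : ℂ, ‖w‖ < ε →
            ∃ z : ℂ, ‖z‖ < R ∧ q.eval z = w) ∧
      (∀ z : ℂ, ‖z‖ < R → q.eval z ≠ -((R : ℂ) / n)) := by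
  have hRC : (R : ℂ) ≠ 0 := by exact_mod_cast hR.ne'
  have hn0 : n ≠ 0 := Nat.one_le_iff_ne_zero.mp hn
  have hnC : (n : ℂ) ≠ 0 := Nat.cast_ne_zero.mpr hn0
  have key : ∀ z : ℂ, ‖z‖ < R → q.eval z ≠ -((R : ℂ) / n) := by
    intro z hz h
    rw [hq] at h
    simp only [Polynomial.eval_mul, Polynomial.eval_C, Polynomial.eval_sub,
      Polynomial.eval_pow, Polynomial.eval_add, Polynomial.eval_one,
      Polynomial.eval_X] at h
    have hdiv : ((R : ℂ) / n) ≠ 0 := div_ne_zero hRC hnC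
    have h2 : (1 + (R : ℂ)⁻¹ * z) ^ n - 1 = -1 :=
      mul_left_cancel₀ hdiv (h.trans (by ring))
    have h3 : (1 + (R : ℂ)⁻¹ * z) ^ n = 0 := by linear_combination h2
    have h4 : 1 + (R : ℂ)⁻¹ * z = 0 := pow_eq_zero_iff hn0 |>.mp h3
    have h5 : z = -R := by
      field_simp at h4
      linear_combination h4
    rw [h5] at hz
    simp [abs_of_pos hR] at hz
  refine ⟨by simp [hq], ?_, ?_, key⟩
  · rw [hq]
    simp [Polynomial.derivative_pow]
    field_simp
  · intro ε hε hall
    have hw : ‖(-((R : ℂ) / n))‖ < ε := by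
      have : ‖(-((R : ℂ) / n))‖ = R / n := by
        rw [norm_neg, norm_div]
        simp [abs_of_pos hR]
      linarith [this ▸ hε]
    obtain ⟨z, hz, hqz⟩ := hall _ hw
    exact key z hz hqz
end

section
/- Let q(z) = z + q₂z² + ⋯ + qₙzⁿ be a complex polynomial with q(0) = 0 and q'(0) = 1. For every complex number z there exists a point η ∈ ℂ such that q(z) = q(η) and |q(z)| ≥ |η|/n. -/
theorem exists_preimage_with_lower_bound
    (n : ℕ) (hn : 1 ≤ n) (q : Polynomial ℂ)
    (hdeg : q.natDegree ≤ n) (h0 : q.coeff 0 = 0) (h1 : q.coeff 1 = 1) :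
    ∀ z : ℂ, ∃ η : ℂ, q.eval z = q.eval η ∧
      ‖q.eval z‖ ≥ ‖η‖ / n := by
  intro z
  set w : ℂ := q.eval z with hw
  set p : Polynomial ℂ := q - Polynomial.C w with hp
  have hc1 : p.coeff 1 = 1 := by
    simp [hp, Polynomial.coeff_sub, Polynomial.coeff_C, h1]
  have hc0 : p.coeff 0 = -w := by
    simp [hp, Polynomial.coeff_sub, Polynomial.coeff_C, h0]
  have hpne : p ≠ 0 := fun h => by simp [h] at hc1
  have hm1 : 1 ≤ p.natDegree := Polynomial.le_natDegree_of_ne_zero (by rw [hc1]; exact one_ne_zero)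
  have hmn : p.natDegree ≤ n := by
    refine le_trans (Polynomial.natDegree_sub_le q (Polynomial.C w)) ?_
    simp [hdeg]
  set m : ℕ := p.natDegree with hm
  set s : Multiset ℂ := p.roots with hs
  have hcard : Multiset.card s = m :=
    (Polynomial.splits_iff_card_roots.mp (IsAlgClosed.splits p))
  -- z is a root of p
  have hzs : z ∈ s := by
    rw [hs, Polynomial.mem_roots hpne]
    simp [hp, hw]
  -- choose a root of minimal modulus
  have hsne : s.toFinset.Nonempty := by
    rw [Multiset.toFinset_nonempty]
    intro h
    rw [h] at hzs; exact absurd hzs (Multiset.notMem_zero z)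
  obtain ⟨η, hηs, hηmin⟩ := s.toFinset.exists_min_image (‖·‖) hsne
  rw [Multiset.mem_toFinset] at hηs
  have hηmin' : ∀ b ∈ s, ‖η‖ ≤ ‖b‖ := fun b hb =>
    hηmin b (Multiset.mem_toFinset.mpr hb)
  have hqη : q.eval η = w := by
    have := (Polynomial.mem_roots hpne).mp hηs
    have h2 : q.eval η - w = 0 := by simpa [hp] using this
    exact sub_eq_zero.mp h2
  refine ⟨η, hqη.symm, ?_⟩
  -- Vieta's formulas
  have hv0 : p.coeff 0 = p.leadingCoeff * (-1) ^ (m - 0) * s.esymm (m - 0) :=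
    Polynomial.coeff_eq_esymm_roots_of_card hcard (Nat.zero_le m)
  have hv1 : p.coeff 1 = p.leadingCoeff * (-1) ^ (m - 1) * s.esymm (m - 1) :=
    Polynomial.coeff_eq_esymm_roots_of_card hcard hm1
  set P : ℝ := (s.map (‖·‖)).prod with hP
  have hPnn : 0 ≤ P := Multiset.prod_nonneg (by
    intro x hx
    obtain ⟨a, _, rfl⟩ := Multiset.mem_map.mp hx
    exact norm_nonneg a)
  -- |w| = |lc| * P
  have habs0 : ‖w‖ = ‖p.leadingCoeff‖ * P := by
    have hesm : s.esymm m = s.prod := by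
      have hpc : s.powersetCard (Multiset.card s) = {s} := by
        have hcc : Multiset.card (s.powersetCard (Multiset.card s)) = 1 := by
          rw [Multiset.card_powersetCard, Nat.choose_self]
        obtain ⟨a, ha⟩ := Multiset.card_eq_one.mp hcc
        have hsmem : s ∈ s.powersetCard (Multiset.card s) :=
          Multiset.mem_powersetCard.mpr ⟨le_refl s, rfl⟩
        rw [ha] at hsmem ⊢
        rw [Multiset.mem_singleton.mp hsmem]
      rw [Multiset.esymm, ← hcard, hpc]
      simp
    have : ‖p.coeff 0‖ = ‖p.leadingCoeff‖ * ‖s.prod‖ := by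
      rw [hv0]; simp only [Nat.sub_zero, hesm]
      rw [norm_mul, norm_mul, norm_pow]
      simp
    rw [hc0, norm_neg] at this
    rw [this, hP]; congr 1; exact map_multiset_prod normHom s
  -- 1 = |lc| * |esymm (m-1)|
  have habs1 : 1 = ‖p.leadingCoeff‖ * ‖s.esymm (m - 1)‖ := by
    have : ‖p.coeff 1‖ = ‖p.leadingCoeff‖ *
        ‖s.esymm (m - 1)‖ := by
      rw [hv1, norm_mul, norm_mul, norm_pow]
      simp
    rw [hc1] at this
    simpa using this
  -- bound on esymm (m-1)
  have hbound : ‖s.esymm (m - 1)‖ * ‖η‖ ≤ m * P := by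
    have hterm : ∀ t ∈ s.powersetCard (m - 1), ‖t.prod‖ * ‖η‖ ≤ P := by
      intro t ht
      obtain ⟨hts, htc⟩ := (Multiset.mem_powersetCard).mp ht
      obtain ⟨a, ha⟩ := Multiset.card_eq_one.mp (by
        rw [Multiset.card_sub hts, hcard, htc]
        omega : Multiset.card (s - t) = 1)
      have hsa : s = t + {a} := by
        rw [← ha, add_comm]; exact (tsub_add_cancel_of_le hts).symm
      have haS : a ∈ s := by rw [hsa]; simp
      have : P = (t.map (‖·‖)).prod * ‖a‖ := by
        rw [hP, hsa, Multiset.map_add, Multiset.prod_add]; simp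
      rw [this, show ‖t.prod‖ = (t.map (‖·‖)).prod from map_multiset_prod normHom t]
      refine mul_le_mul_of_nonneg_left (hηmin' a haS) ?_
      exact Multiset.prod_nonneg (by
        intro x hx
        obtain ⟨b, _, rfl⟩ := Multiset.mem_map.mp hx
        exact norm_nonneg b)
    calc ‖s.esymm (m - 1)‖ * ‖η‖
        ≤ ((s.powersetCard (m - 1)).map (fun t => ‖t.prod‖)).sum
            * ‖η‖ := by
          refine mul_le_mul_of_nonneg_right ?_ (norm_nonneg η)
          rw [Multiset.esymm]
          have := norm_multiset_sum_le ((s.powersetCard (m - 1)).map Multiset.prod)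
          simpa [Multiset.map_map, Function.comp] using this
      _ = ((s.powersetCard (m - 1)).map
            (fun t => ‖t.prod‖ * ‖η‖)).sum := by
          rw [← Multiset.sum_map_mul_right]
      _ ≤ ((s.powersetCard (m - 1)).map (fun _ => P)).sum := by
          exact Multiset.sum_map_le_sum_map _ _ hterm
      _ = (Multiset.card (s.powersetCard (m - 1))) * P := by
          rw [Multiset.map_const', Multiset.sum_replicate, nsmul_eq_mul]
      _ = m * P := by
          rw [Multiset.card_powersetCard, hcard]
          congr 2
          rw [Nat.choose_symm hm1, Nat.choose_one_right]
  -- conclude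
  have key : ‖η‖ ≤ (m : ℝ) * ‖w‖ := by
    calc ‖η‖ = (‖p.leadingCoeff‖ * ‖s.esymm (m - 1)‖)
          * ‖η‖ := by rw [← habs1, one_mul]
      _ = ‖p.leadingCoeff‖ * (‖s.esymm (m - 1)‖ * ‖η‖) := by
          ring
      _ ≤ ‖p.leadingCoeff‖ * (m * P) :=
          mul_le_mul_of_nonneg_left hbound (norm_nonneg _)
      _ = (m : ℝ) * (‖p.leadingCoeff‖ * P) := by ring
      _ = (m : ℝ) * ‖w‖ := by rw [habs0]
  have hmn' : (m : ℝ) ≤ n := Nat.cast_le.mpr hmn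
  have hn0 : (0 : ℝ) < n := by positivity
  rw [ge_iff_le, div_le_iff₀ hn0]
  calc ‖η‖ ≤ (m : ℝ) * ‖w‖ := key
    _ ≤ (n : ℝ) * ‖w‖ := by
        exact mul_le_mul_of_nonneg_right hmn' (norm_nonneg _)
    _ = ‖w‖ * n := by ring
end

section
/- Let p(z) = p₀ + p₁z + ⋯ + pₙzⁿ be a complex polynomial of degree at most n with n ≥ 1, and let z₁, z₂ ∈ ℂ be points such that p'(z₁) ≠ 0. Then there exists a point ζ ∈ ℂ such that p(ζ) = p(z₂) and |p(z₁) − p(z₂)| ≥ (1/n)·|p'(z₁)|·|z₁ − ζ|. -/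
open Polynomial

theorem covering_theorem_for_polynomials
    (n : ℕ) (hn : 1 ≤ n) (p : Polynomial ℂ) (hdeg : p.natDegree ≤ n)
    (z₁ z₂ : ℂ) (hp' : p.derivative.eval z₁ ≠ 0) :
    ∃ ζ : ℂ, p.eval ζ = p.eval z₂ ∧
      ‖p.eval z₁ - p.eval z₂‖ ≥
        (1 / n) * ‖p.derivative.eval z₁‖ * ‖z₁ - ζ‖ := by
  classical
  set c : ℂ := p.eval z₂ with hc
  set q : Polynomial ℂ := p - Polynomial.C c with hq
  have hqd : q.derivative = p.derivative := by simp [hq]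
  have hqz2 : q.eval z₂ = 0 := by simp [hq, hc]
  have hqne : q ≠ 0 := by
    intro h
    apply hp'
    rw [← hqd, h]
    simp
  by_cases h1 : q.eval z₁ = 0
  · refine ⟨z₁, ?_, ?_⟩
    · have : p.eval z₁ - c = 0 := by simpa [hq] using h1
      simpa [hc] using sub_eq_zero.mp this
    · simp
  · set R := q.roots with hR
    have hz2R : z₂ ∈ R := by
      rw [hR, Polynomial.mem_roots hqne]
      exact hqz2
    obtain ⟨ζ, hζF, hmin⟩ := R.toFinset.exists_min_image (fun a => ‖z₁ - a‖)
      ⟨z₂, Multiset.mem_toFinset.2 hz2R⟩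
    have hζR : ζ ∈ R := Multiset.mem_toFinset.1 hζF
    have hζroot : q.eval ζ = 0 := by
      have := (Polynomial.mem_roots hqne).mp hζR
      exact this
    refine ⟨ζ, ?_, ?_⟩
    · have : p.eval ζ - c = 0 := by simpa [hq] using hζroot
      simpa [hc] using sub_eq_zero.mp this
    set lc : ℂ := q.leadingCoeff with hlc
    have hsplit : q = Polynomial.C lc * (R.map fun a => Polynomial.X - Polynomial.C a).prod :=
      (IsAlgClosed.splits q).eq_prod_roots
    have heval : ∀ x : ℂ, q.eval x = lc * (R.map fun a => x - a).prod := by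
      intro x
      conv_lhs => rw [hsplit]
      simp [Polynomial.eval_multiset_prod, Multiset.map_map]
    set A : ℝ := ‖q.eval z₁‖ with hA
    have hApos : 0 < A := by
      rw [hA]
      exact norm_pos_iff.mpr h1
    set m : ℝ := ‖z₁ - ζ‖ with hm
    have hmpos : 0 < m := by
      rw [hm]
      apply norm_pos_iff.mpr
      intro h
      apply h1
      have : z₁ = ζ := sub_eq_zero.mp h
      rw [this]; exact hζroot
    -- derivative formula
    have hderiv : q.derivative.eval z₁ =
        (R.map fun i => lc * ((R.erase i).map fun a => z₁ - a).prod).sum := by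
      conv_lhs => rw [hsplit]
      rw [Polynomial.derivative_mul, Polynomial.derivative_C, zero_mul, zero_add,
        Polynomial.derivative_prod]
      have hms : ∀ (s : Multiset (Polynomial ℂ)), Polynomial.eval z₁ s.sum =
          (s.map (Polynomial.eval z₁)).sum := fun s => by
        simpa using map_multiset_sum (Polynomial.evalRingHom z₁) s
      rw [Polynomial.eval_mul, Polynomial.eval_C, hms, Multiset.map_map,
        ← Multiset.sum_map_mul_left]
      congr 1
      apply Multiset.map_congr rfl
      intro i _
      simp [Polynomial.eval_multiset_prod, Multiset.map_map]
    -- bound each term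
    have hterm : ∀ i ∈ R, ‖lc * ((R.erase i).map fun a => z₁ - a).prod‖ ≤ A / m := by
      intro i hi
      have hcons : (R.map fun a => z₁ - a).prod =
          (z₁ - i) * ((R.erase i).map fun a => z₁ - a).prod := by
        conv_lhs => rw [← Multiset.cons_erase hi]
        simp
      have hkey : A = ‖z₁ - i‖ *
          ‖lc * ((R.erase i).map fun a => z₁ - a).prod‖ := by
        rw [hA, heval, hcons, norm_mul, norm_mul, norm_mul]
        ring
      have hi' : m ≤ ‖z₁ - i‖ := hmin i (Multiset.mem_toFinset.2 hi)
      have hipos : 0 < ‖z₁ - i‖ := lt_of_lt_of_le hmpos hi'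
      rw [le_div_iff₀ hmpos]
      calc ‖lc * ((R.erase i).map fun a => z₁ - a).prod‖ * m
          ≤ ‖lc * ((R.erase i).map fun a => z₁ - a).prod‖ *
            ‖z₁ - i‖ := by
            apply mul_le_mul_of_nonneg_left hi' (norm_nonneg _)
        _ = A := by rw [hkey]; ring
    -- sum bound
    have hsum : ‖q.derivative.eval z₁‖ ≤ R.card * (A / m) := by
      rw [hderiv]
      calc ‖(R.map fun i => lc * ((R.erase i).map fun a => z₁ - a).prod).sum‖
          ≤ ((R.map fun i => lc * ((R.erase i).map fun a => z₁ - a).prod).map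
              (fun x => ‖x‖)).sum := by
            exact
              norm_multiset_sum_le (R.map fun i => lc * ((R.erase i).map fun a => z₁ - a).prod)
        _ ≤ _ := by
            rw [Multiset.map_map]
            have := Multiset.sum_le_card_nsmul
              (R.map fun i => ‖lc * ((R.erase i).map fun a => z₁ - a).prod‖)
              (A / m) ?_
            · simpa [Multiset.map_map, nsmul_eq_mul] using this
            · intro x hx
              obtain ⟨i, hi, rfl⟩ := Multiset.mem_map.mp hx
              exact hterm i hi
    have hcard : R.card ≤ n := by
      calc R.card ≤ q.natDegree := q.card_roots'
        _ ≤ n := by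
          rw [hq]
          simpa [Polynomial.natDegree_sub_C] using hdeg
    -- conclude
    have hfin : ‖p.eval z₁ - c‖ = A := by rw [hA]; congr 1; simp [hq]
    rw [hfin, ← hqd]
    have h2 : ‖q.derivative.eval z₁‖ * m ≤ R.card * A := by
      rw [← le_div_iff₀ hmpos]
      calc ‖q.derivative.eval z₁‖ ≤ R.card * (A / m) := hsum
        _ = R.card * A / m := by ring
    have hn' : (0:ℝ) < n := by exact_mod_cast hn
    have hdn : (R.card : ℝ) / n ≤ 1 := by
      rw [div_le_one hn']
      exact_mod_cast hcard
    calc (1 / (n:ℝ)) * ‖q.derivative.eval z₁‖ * m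
        = (‖q.derivative.eval z₁‖ * m) / n := by ring
      _ ≤ (R.card * A) / n := by gcongr
      _ = ((R.card : ℝ) / n) * A := by ring
      _ ≤ 1 * A := mul_le_mul_of_nonneg_right hdn (le_of_lt hApos)
      _ = A := one_mul A
end

section
/- Let q(z) = q̂(1)z + ⋯ + q̂(n)zⁿ be a nonzero complex polynomial with q(0) = 0 and degree at most n. Then q(Δ) contains an open neighborhood of 0; specifically it contains the open disk of radius max₁≤k≤n |q̂(k)|/C(n,k) > 0 centered at 0. -/
open Polynomial Multiset

noncomputable def Complex.abs : AbsoluteValue ℂ ℝ where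
  toFun := norm
  map_mul' := norm_mul
  nonneg' := norm_nonneg
  eq_zero' := fun _ => norm_eq_zero
  add_le' := norm_add_le

theorem Complex.norm_eq_abs (z : ℂ) : ‖z‖ = Complex.abs z := rfl

lemma term_abs_le (s : Multiset ℂ) (h1 : ∀ z ∈ s, 1 ≤ Complex.abs z)
    (t : Multiset ℂ) (ht : t ≤ s) :
    Complex.abs t.prod ≤ (s.map Complex.abs).prod := by
  rw [map_multiset_prod Complex.abs t]
  have hle : t.map Complex.abs ≤ s.map Complex.abs := Multiset.map_le_map ht
  have h2 : (s.map Complex.abs - t.map Complex.abs) + t.map Complex.abs = s.map Complex.abs :=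
    tsub_add_cancel_of_le hle
  rw [← h2, Multiset.prod_add]
  have hre : (1:ℝ) ≤ (s.map Complex.abs - t.map Complex.abs).prod := by
    apply Multiset.one_le_prod
    intro a ha
    have : a ∈ s.map Complex.abs := Multiset.mem_of_le (Multiset.sub_le_self _ _) ha
    obtain ⟨z, hz, rfl⟩ := Multiset.mem_map.1 this
    exact h1 z hz
  have hnn : 0 ≤ (t.map Complex.abs).prod := by
    apply Multiset.prod_nonneg; intro a ha
    obtain ⟨z, _, rfl⟩ := Multiset.mem_map.1 ha
    exact AbsoluteValue.nonneg _ z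
  nlinarith

lemma esymm_abs_le (s : Multiset ℂ) (h1 : ∀ z ∈ s, 1 ≤ Complex.abs z) (j : ℕ) :
    Complex.abs (s.esymm j) ≤ ((Multiset.card s).choose j : ℝ) * (s.map Complex.abs).prod := by
  rw [Multiset.esymm]
  have habs : Complex.abs (((s.powersetCard j).map Multiset.prod).sum)
      ≤ ((((s.powersetCard j).map Multiset.prod)).map Complex.abs).sum := by
    simpa [Complex.norm_eq_abs] using
      norm_multiset_sum_le ((s.powersetCard j).map Multiset.prod)
  refine habs.trans ?_
  have := Multiset.sum_le_card_nsmul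
    ((((s.powersetCard j).map Multiset.prod)).map Complex.abs)
    ((s.map Complex.abs).prod) ?_
  · refine this.trans_eq ?_
    simp [Multiset.card_powersetCard, nsmul_eq_mul]
  · intro x hx
    rw [Multiset.map_map] at hx
    obtain ⟨t, ht, rfl⟩ := Multiset.mem_map.1 hx
    exact term_abs_le s h1 t (Multiset.mem_powersetCard.1 ht).1

lemma coeff_bound (P : ℂ[X]) (hroots : ∀ z ∈ P.roots, 1 ≤ Complex.abs z)
    (k : ℕ) (hk : k ≤ P.natDegree) :
    Complex.abs (P.coeff k) ≤ (P.natDegree.choose k : ℝ) * Complex.abs (P.coeff 0) := by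
  have hcard : Multiset.card P.roots = P.natDegree :=
    (splits_iff_card_roots).1 (IsAlgClosed.splits P)
  have hkk := Polynomial.coeff_eq_esymm_roots_of_card hcard hk
  -- |coeff 0| = |lc| * ∏ |roots|
  have hfact := Polynomial.C_leadingCoeff_mul_prod_multiset_X_sub_C hcard
  have habs0 : Complex.abs (P.coeff 0)
      = Complex.abs P.leadingCoeff * (P.roots.map Complex.abs).prod := by
    have he := congrArg (Polynomial.eval 0) hfact
    rw [eval_mul, eval_C, Polynomial.eval_multiset_prod, Multiset.map_map] at he
    rw [Polynomial.coeff_zero_eq_eval_zero, ← he]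
    simp only [Function.comp, eval_sub, eval_X, eval_C, zero_sub]
    rw [map_mul, map_multiset_prod Complex.abs, Multiset.map_map]
    simp [Function.comp]
  rw [hkk, habs0, map_mul, map_mul, map_pow, map_neg_eq_map, map_one, one_pow, mul_one]
  have hes := esymm_abs_le P.roots hroots (P.natDegree - k)
  rw [hcard] at hes
  calc Complex.abs P.leadingCoeff * Complex.abs (P.roots.esymm (P.natDegree - k))
      ≤ Complex.abs P.leadingCoeff *
        ((P.natDegree.choose (P.natDegree - k) : ℝ) * (P.roots.map Complex.abs).prod) :=
        mul_le_mul_of_nonneg_left hes (AbsoluteValue.nonneg _ _)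
    _ = (P.natDegree.choose (P.natDegree - k) : ℝ) *
        (Complex.abs P.leadingCoeff * (P.roots.map Complex.abs).prod) := by ring
    _ = _ := by rw [Nat.choose_symm hk]

theorem range_contains_neighborhood_of_zero
    (n : ℕ) (qh : ℕ → ℂ)
    (hne : ∃ k ∈ Finset.Icc 1 n, qh k ≠ 0)
    (q : ℂ → ℂ) (hq : ∀ z, q z = ∑ k ∈ Finset.Icc 1 n, qh k * z ^ k) :
    0 < (Finset.Icc 1 n).sup'
        (by obtain ⟨k, hk, _⟩ := hne; exact ⟨k, hk⟩)
        (fun k => ‖qh k‖ / (n.choose k)) ∧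
    ∀ w : ℂ,
      ‖w‖ <
        (Finset.Icc 1 n).sup'
          (by obtain ⟨k, hk, _⟩ := hne; exact ⟨k, hk⟩)
          (fun k => ‖qh k‖ / (n.choose k)) →
      ∃ z : ℂ, ‖z‖ < 1 ∧ q z = w := by
  simp only [Complex.norm_eq_abs]
  obtain ⟨k₀, hk₀, hqk₀⟩ := hne
  have hne' : (Finset.Icc 1 n).Nonempty := ⟨k₀, hk₀⟩
  constructor
  · apply lt_of_lt_of_le _ (Finset.le_sup' _ hk₀)
    apply div_pos (by simpa using hqk₀)
    exact_mod_cast Nat.choose_pos (Finset.mem_Icc.1 hk₀).2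
  · intro w hw
    by_cases hw0 : w = 0
    · refine ⟨0, by simp, ?_⟩
      rw [hq, hw0]
      apply Finset.sum_eq_zero
      intro k hk
      have : 1 ≤ k := (Finset.mem_Icc.1 hk).1
      simp [zero_pow (by omega : k ≠ 0)]
    by_contra hcon
    push_neg at hcon
    -- the polynomial q(X) - w has no roots in the unit disk
    set P : ℂ[X] := (∑ k ∈ Finset.Icc 1 n, C (qh k) * X ^ k) - C w with hP
    have hPeval : ∀ z, P.eval z = q z - w := by
      intro z; rw [hq]; simp [hP, Polynomial.eval_finset_sum]
    have hc0 : P.coeff 0 = -w := by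
      rw [Polynomial.coeff_sub, Polynomial.coeff_C]
      have : (∑ k ∈ Finset.Icc 1 n, C (qh k) * X ^ k).coeff 0 = 0 := by
        rw [Polynomial.finset_sum_coeff]
        apply Finset.sum_eq_zero
        intro k hk
        have h1 : 1 ≤ k := (Finset.mem_Icc.1 hk).1
        rw [Polynomial.coeff_C_mul, Polynomial.coeff_X_pow]
        simp [Nat.ne_of_lt h1]
      simp [this]
    have hck : ∀ k ∈ Finset.Icc 1 n, P.coeff k = qh k := by
      intro k hkmem
      have hk1 : 1 ≤ k := (Finset.mem_Icc.1 hkmem).1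
      rw [Polynomial.coeff_sub, Polynomial.coeff_C, if_neg (by omega)]
      rw [Polynomial.finset_sum_coeff, sub_zero]
      rw [Finset.sum_eq_single k]
      · rw [Polynomial.coeff_C_mul, Polynomial.coeff_X_pow, if_pos rfl, mul_one]
      · intro b hb hbk
        rw [Polynomial.coeff_C_mul, Polynomial.coeff_X_pow, if_neg (fun h => hbk h.symm), mul_zero]
      · intro h
        exact absurd hkmem h
    have hroots : ∀ z ∈ P.roots, 1 ≤ Complex.abs z := by
      intro z hz
      by_contra hlt
      push_neg at hlt
      have : P.eval z = 0 := (Polynomial.isRoot_of_mem_roots hz)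
      rw [hPeval] at this
      exact hcon z hlt (sub_eq_zero.1 this)
    have hP0 : P ≠ 0 := fun h => hw0 (by simpa [h] using hc0.symm)
    have hdeg : P.natDegree ≤ n := by
      apply le_trans (Polynomial.natDegree_sub_le _ _)
      apply max_le
      · apply le_trans (Polynomial.natDegree_sum_le _ _)
        refine (Finset.fold_max_le n).2 ?_
        constructor
        · exact Nat.zero_le n
        · intro k hk
          exact le_trans (Polynomial.natDegree_C_mul_le _ _)
            (le_trans (Polynomial.natDegree_X_pow_le _) (Finset.mem_Icc.1 hk).2)
      · simp
    obtain ⟨k, hkmem, hklt⟩ := (Finset.lt_sup'_iff _).1 hw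
    obtain ⟨hk1, hkn⟩ := Finset.mem_Icc.1 hkmem
    have hchoose : (0:ℝ) < (n.choose k : ℝ) := by exact_mod_cast Nat.choose_pos hkn
    have hgt : (n.choose k : ℝ) * Complex.abs w < Complex.abs (qh k) := by
      rw [lt_div_iff₀ hchoose] at hklt; linarith [hklt]
    by_cases hkd : k ≤ P.natDegree
    · have := coeff_bound P hroots k hkd
      rw [hck k hkmem, hc0, map_neg_eq_map] at this
      have hcc : ((P.natDegree.choose k : ℝ)) ≤ ((n.choose k : ℝ)) := by
        exact_mod_cast Nat.choose_le_choose k hdeg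
      have hwnn : 0 ≤ Complex.abs w := AbsoluteValue.nonneg _ _
      nlinarith
    · push_neg at hkd
      have : P.coeff k = 0 := Polynomial.coeff_eq_zero_of_natDegree_lt hkd
      rw [hck k hkmem] at this
      rw [this] at hgt
      simp at hgt
      nlinarith [AbsoluteValue.nonneg Complex.abs w]
end
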